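/- Let E be a finite-dimensional vector space with a symmetric nondegenerate bilinear form of split signature, and let 𝒢 be a self-adjoint orthogonal operator with ⟨𝒢e,e⟩ > 0 for all e ≠ 0. Let K ⊆ E be an isotropic subspace. Then the natural map K⊥ ∩ 𝒢(K⊥) → K⊥/K is a linear isomorphism. -/

import Mathlib

/-- For a generalized metric `𝒢` on a split-signature space and an isotropic
subspace `K`, the natural map `K⊥ ∩ 𝒢(K⊥) → K⊥/K` is a linear isomorphism. -/
theorem stmt5
    {E : Type*} [AddCommGroup E] [Module ℝ E] [FiniteDimensional ℝ E]
    (B : LinearMap.BilinForm ℝ E)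
    (hsymm : ∀ a b, B a b = B b a)
    (hnd : ∀ a, (∀ b, B a b = 0) → a = 0)
    (hsplit : ∃ N : Submodule ℝ E, (∀ x ∈ N, ∀ y ∈ N, B x y = 0) ∧
      2 * Module.finrank ℝ N = Module.finrank ℝ E)
    (G : E →ₗ[ℝ] E)
    (hGO : ∀ a b, B (G a) (G b) = B a b)
    (hGsa : ∀ a b, B (G a) b = B a (G b))
    (hpos : ∀ e : E, e ≠ 0 → 0 < B (G e) e)
    (K : Submodule ℝ E)
    (hKiso : ∀ x ∈ K, ∀ y ∈ K, B x y = 0)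
    (hKle : K ≤ B.orthogonal K) :
    Function.Bijective
      ((Submodule.comap (B.orthogonal K).subtype K).mkQ.comp
        (Submodule.inclusion (inf_le_left :
          B.orthogonal K ⊓ (B.orthogonal K).map G ≤ B.orthogonal K))) := by
  -- G is an involution
  have hG2 : ∀ a, G (G a) = a := by
    intro a
    have h : ∀ b, B (G (G a) - a) b = 0 := by
      intro b
      have h1 : B (G (G a)) b = B a b := by rw [hGsa]; exact hGO a b
      simp only [map_sub, LinearMap.sub_apply, h1, sub_self]
    have := hnd _ h
    rwa [sub_eq_zero] at this
  set C : LinearMap.BilinForm ℝ E := B ∘ₗ G with hC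
  have hCapp : ∀ a b, C a b = B (G a) b := fun a b => rfl
  have hCsymm : ∀ a b, C a b = C b a := by
    intro a b; rw [hCapp, hCapp, hGsa, hsymm]
  have hCrefl : C.IsRefl := fun a b h => by
    show C b a = 0
    rw [hCsymm]; exact h
  -- key: C-orthogonal of K is G(K⊥)
  have hkey : C.orthogonal K = (B.orthogonal K).map G := by
    ext x
    constructor
    · intro hx
      refine ⟨G x, ?_, hG2 x⟩
      intro n hn
      have h1 : B (G n) x = 0 := hx n hn
      show B n (G x) = 0
      rw [← hGsa]; exact h1
    · rintro ⟨y, hy, rfl⟩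
      intro n hn
      show B (G n) (G y) = 0
      rw [hGO]; exact hy n hn
  have hcompl : IsCompl K (C.orthogonal K) := by
    apply LinearMap.BilinForm.isCompl_orthogonal_of_restrict_nondegenerate hCrefl
    suffices hL : (C.restrict K).SeparatingLeft from
      ⟨hL, fun y hy => hL y fun z => by rw [← hy z]; exact hCsymm _ _⟩
    rintro ⟨x, hx⟩ h
    have h2 : B (G x) x = 0 := h ⟨x, hx⟩
    ext
    show x = (0 : E)
    by_contra hx0
    exact absurd h2 (ne_of_gt (hpos x hx0))
  constructor
  · rw [injective_iff_map_eq_zero]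
    rintro ⟨x, hx1, hx2⟩ hz
    rw [LinearMap.comp_apply, Submodule.mkQ_apply, Submodule.Quotient.mk_eq_zero,
      Submodule.mem_comap, Submodule.subtype_apply, Submodule.coe_inclusion] at hz
    have hxK : x ∈ K := hz
    obtain ⟨y, hy, rfl⟩ := hx2
    ext
    show G y = (0 : E)
    by_contra h0
    have hp := hpos (G y) h0
    rw [hG2] at hp
    have hz2 : B (G y) y = 0 := hy _ hxK
    rw [hsymm] at hp
    exact absurd hz2 (ne_of_gt hp)
  · intro q
    obtain ⟨w, rfl⟩ := Submodule.mkQ_surjective _ q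
    have hwE : (w : E) ∈ B.orthogonal K := w.2
    have htop : (w : E) ∈ K ⊔ C.orthogonal K := by
      rw [hcompl.sup_eq_top]; trivial
    obtain ⟨k, hk, u, hu, hku⟩ := Submodule.mem_sup.mp htop
    have huK : u ∈ B.orthogonal K := by
      have h3 : u = (w : E) - k := by rw [← hku]; abel
      rw [h3]
      exact Submodule.sub_mem _ hwE (hKle hk)
    have huS : u ∈ B.orthogonal K ⊓ (B.orthogonal K).map G := ⟨huK, hkey ▸ hu⟩
    refine ⟨⟨u, huS⟩, ?_⟩
    rw [LinearMap.comp_apply, Submodule.mkQ_apply, Submodule.mkQ_apply,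
      Submodule.Quotient.eq, Submodule.mem_comap,
      Submodule.subtype_apply, Submodule.coe_sub, Submodule.coe_inclusion]
    show u - (w : E) ∈ K
    rw [show u - (w : E) = -k by rw [← hku]; abel]
    exact Submodule.neg_mem _ hk
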